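/- Let H be a locally semicomplete digraph, let C: v_1→v_2→…→v_k→v_1 be an induced directed cycle of H with k ≥ 4, and let x be a vertex of H not on C. Then at most two vertices of C dominate x, and if exactly two do, they are consecutive on C; likewise, x dominates at most two vertices of C, and if exactly two, they are consecutive on C. Consequently, x is adjacent to at most four vertices of C. -/

import Mathlib

open Fin.NatCast Fin.CommRing in
lemma aux14 {k : ℕ} [NeZero k] (hk : 4 ≤ k) (S : Finset (Fin k))
    (h : ∀ i ∈ S, ∀ j ∈ S, i ≠ j → j = i + 1 ∨ i = j + 1) :
    S.card ≤ 2 ∧ (S.card = 2 → ∃ i, S = {i, i + 1}) := by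
  have hone : (1 : Fin k) ≠ 0 := by
    intro hEq
    have h2 : ((1:ℕ) : Fin k).val = ((0:ℕ) : Fin k).val := congrArg Fin.val hEq
    rw [Fin.val_natCast, Fin.val_natCast, Nat.mod_eq_of_lt (by omega), Nat.zero_mod] at h2
    omega
  have hthree : (1 : Fin k) + 1 + 1 ≠ 0 := by
    intro hEq
    have h2 : ((3:ℕ) : Fin k).val = ((0:ℕ) : Fin k).val := by
      have : ((3:ℕ) : Fin k) = (1 : Fin k) + 1 + 1 := by push_cast; ring
      rw [this, hEq]; rfl
    rw [Fin.val_natCast, Fin.val_natCast, Nat.mod_eq_of_lt (by omega), Nat.zero_mod] at h2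
    omega
  have h1 : ∀ a : Fin k, a + 1 ≠ a := by
    intro a hEq
    exact hone (add_left_cancel (hEq.trans (add_zero a).symm))
  have h3 : ∀ a : Fin k, a + 1 + 1 + 1 ≠ a := by
    intro a hEq
    apply hthree
    have : a + (1 + 1 + 1) = a + 0 := calc
      a + (1 + 1 + 1) = a + 1 + 1 + 1 := by ring
      _ = a := hEq
      _ = a + 0 := (add_zero a).symm
    exact add_left_cancel this
  constructor
  · by_contra hc
    push_neg at hc
    obtain ⟨a, ha, b, hb, c, hcS, hab, hac, hbc⟩ := Finset.two_lt_card.mp hc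
    rcases h a ha b hb hab with e1 | e1 <;>
      rcases h a ha c hcS hac with e2 | e2 <;>
      rcases h b hb c hcS hbc with e3 | e3
    · exact hbc (e1.trans e2.symm)
    · exact hbc (e1.trans e2.symm)
    · -- e1 : b = a+1, e2 : a = c+1, e3 : c = b+1
      refine h3 a ?_
      exact (calc a = c + 1 := e2
        _ = (b + 1) + 1 := by rw [e3]
        _ = a + 1 + 1 + 1 := by rw [e1]).symm
    · -- e1 : b = a+1, e2 : a = c+1, e3 : b = c+1
      exact hab (e2.trans e3.symm)
    · -- e1 : a = b+1, e2 : c = a+1, e3 : c = b+1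
      exact h1 a (by rw [← e2, e3, ← e1])
    · -- e1 : a = b+1, e2 : c = a+1, e3 : b = c+1
      refine h3 b ?_
      exact (calc b = c + 1 := e3
        _ = (a + 1) + 1 := by rw [e2]
        _ = b + 1 + 1 + 1 := by rw [e1]).symm
    · exact hbc (add_right_cancel (e1.symm.trans e2))
    · exact hbc (add_right_cancel (e1.symm.trans e2))
  · intro h2
    obtain ⟨a, b, hab, rfl⟩ := Finset.card_eq_two.mp h2
    rcases h a (by simp) b (by simp) hab with e | e
    · exact ⟨a, by rw [e]⟩
    · exact ⟨b, by rw [e, Finset.pair_comm]⟩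

/-- If `C : v_1 → … → v_k → v_1` (`k ≥ 4`) is an induced directed cycle of
a locally semicomplete digraph and `x` is a vertex not on `C`, then at most two vertices
of `C` dominate `x` (and if exactly two, they are consecutive), `x` dominates at most two
vertices of `C` (and if exactly two, they are consecutive), and `x` is adjacent to at
most four vertices of `C`. -/
theorem stmt_14 {V : Type} [Fintype V] [DecidableEq V] (A : V → V → Prop)
    [DecidableRel A]
    (hirr : ∀ v, ¬ A v v)
    (hloc_out : ∀ x y z : V, y ≠ z → A x y → A x z → (A y z ∨ A z y))
    (hloc_in : ∀ x y z : V, y ≠ z → A y x → A z x → (A y z ∨ A z y))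
    (k : ℕ) [NeZero k] (hk : 4 ≤ k) (v : Fin k → V) (hinj : Function.Injective v)
    (hinduced : ∀ i j : Fin k, A (v i) (v j) ↔ j = i + 1)
    (x : V) (hx : ∀ i : Fin k, v i ≠ x) :
    (Finset.univ.filter fun i : Fin k => A (v i) x).card ≤ 2 ∧
    ((Finset.univ.filter fun i : Fin k => A (v i) x).card = 2 →
      ∃ i : Fin k, (Finset.univ.filter fun i : Fin k => A (v i) x) = {i, i + 1}) ∧
    (Finset.univ.filter fun i : Fin k => A x (v i)).card ≤ 2 ∧
    ((Finset.univ.filter fun i : Fin k => A x (v i)).card = 2 →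
      ∃ i : Fin k, (Finset.univ.filter fun i : Fin k => A x (v i)) = {i, i + 1}) ∧
    (Finset.univ.filter fun i : Fin k => A (v i) x ∨ A x (v i)).card ≤ 4 := by
  have cond1 : ∀ i ∈ (Finset.univ.filter fun i : Fin k => A (v i) x),
      ∀ j ∈ (Finset.univ.filter fun i : Fin k => A (v i) x), i ≠ j →
      j = i + 1 ∨ i = j + 1 := by
    intro i hi j hj hij
    rw [Finset.mem_filter] at hi hj
    have hne : v i ≠ v j := fun hEq => hij (hinj hEq)
    rcases hloc_in x (v i) (v j) hne hi.2 hj.2 with hA | hA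
    · exact Or.inl ((hinduced i j).mp hA)
    · exact Or.inr ((hinduced j i).mp hA)
  have cond2 : ∀ i ∈ (Finset.univ.filter fun i : Fin k => A x (v i)),
      ∀ j ∈ (Finset.univ.filter fun i : Fin k => A x (v i)), i ≠ j →
      j = i + 1 ∨ i = j + 1 := by
    intro i hi j hj hij
    rw [Finset.mem_filter] at hi hj
    have hne : v i ≠ v j := fun hEq => hij (hinj hEq)
    rcases hloc_out x (v i) (v j) hne hi.2 hj.2 with hA | hA
    · exact Or.inl ((hinduced i j).mp hA)
    · exact Or.inr ((hinduced j i).mp hA)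
  obtain ⟨c1, c1'⟩ := aux14 hk _ cond1
  obtain ⟨c2, c2'⟩ := aux14 hk _ cond2
  refine ⟨c1, c1', c2, c2', ?_⟩
  rw [Finset.filter_or]
  calc _ ≤ (Finset.univ.filter fun i : Fin k => A (v i) x).card +
      (Finset.univ.filter fun i : Fin k => A x (v i)).card := Finset.card_union_le _ _
    _ ≤ 4 := by omega
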